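/- arXiv:1509.04059 — 7 statements merged into one kernel-verified Lean document; each statement's English description precedes it below -/
import Mathlib

section
/- For any unit-norm vectors φ₁,…,φₙ in ℝᵐ (or ℂᵐ) with m ≤ n, the maximum over i ≠ j of |⟨φᵢ, φⱼ⟩| is at least √((n−m)/(m(n−1))). -/
open Matrix Finset

/-- **Welch bound.** For unit-norm vectors `φ₁,…,φₙ` in `𝕜^m` (columns of `Φ`),
the maximum over `i ≠ j` of `|⟨φᵢ, φⱼ⟩|` is at least `√((n−m)/(m(n−1)))`. -/
theorem welch_bound {𝕜 : Type*} [RCLike 𝕜] (m n : ℕ) (hm : 0 < m) (hmn : m ≤ n) (hn : 1 < n)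
    (Φ : Matrix (Fin m) (Fin n) 𝕜)
    (hunit : ∀ j, (Φᴴ * Φ) j j = 1) :
    ∃ i j, i ≠ j ∧
      Real.sqrt (((n : ℝ) - m) / (m * ((n : ℝ) - 1))) ≤ ‖(Φᴴ * Φ) i j‖ := by
  classical
  set G := Φᴴ * Φ with hG
  set A := Φ * Φᴴ with hA
  have htrG : G.trace = (n : 𝕜) := by
    simp [Matrix.trace, Matrix.diag, hunit]
  have htrA : A.trace = (n : 𝕜) := by
    rw [hA, Matrix.trace_mul_comm, ← hG, htrG]
  have key : ∀ {k : ℕ} (B : Matrix (Fin k) (Fin k) 𝕜),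
      RCLike.re ((B * Bᴴ).trace) = ∑ i, ∑ j, ‖B i j‖ ^ 2 := by
    intro k B
    have h1 : (B * Bᴴ).trace = ∑ i, ∑ j, ((‖B i j‖ : 𝕜) ^ 2) := by
      simp [Matrix.trace, Matrix.diag, Matrix.mul_apply, Matrix.conjTranspose_apply,
        RCLike.mul_conj]
    rw [h1, map_sum]
    refine Finset.sum_congr rfl fun i _ => ?_
    rw [map_sum]
    refine Finset.sum_congr rfl fun j _ => ?_
    rw [← RCLike.ofReal_pow]
    exact RCLike.ofReal_re _
  have htr2 : (A * Aᴴ).trace = (G * Gᴴ).trace := by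
    have hAH' : Aᴴ = A := by rw [hA]; simp [Matrix.conjTranspose_mul]
    have hGH' : Gᴴ = G := by rw [hG]; simp [Matrix.conjTranspose_mul]
    rw [hAH', hGH', hA, hG]
    calc (Φ * Φᴴ * (Φ * Φᴴ)).trace = (Φ * (Φᴴ * (Φ * Φᴴ))).trace := by
          rw [Matrix.mul_assoc]
      _ = ((Φᴴ * (Φ * Φᴴ)) * Φ).trace := Matrix.trace_mul_comm _ _
      _ = (Φᴴ * Φ * (Φᴴ * Φ)).trace := by
          rw [Matrix.mul_assoc, Matrix.mul_assoc, Matrix.mul_assoc]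
  set S : ℝ := ∑ i, ∑ j, ‖G i j‖ ^ 2 with hS
  -- Cauchy–Schwarz: n² ≤ m * S
  have hcs : (n : ℝ) ^ 2 ≤ (m : ℝ) * S := by
    have h1 : ∑ i : Fin m, RCLike.re (A i i) = (n : ℝ) := by
      have := congrArg RCLike.re htrA
      simpa [Matrix.trace, Matrix.diag, map_sum] using this
    have h2 : ((n : ℝ)) ^ 2 ≤ (m : ℝ) * ∑ i : Fin m, (RCLike.re (A i i)) ^ 2 := by
      have := sq_sum_le_card_mul_sum_sq (s := (Finset.univ : Finset (Fin m)))
        (f := fun i => RCLike.re (A i i))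
      rw [h1] at this
      simpa using this
    have h4 : ∑ i : Fin m, (RCLike.re (A i i)) ^ 2 ≤ ∑ i, ∑ j, ‖A i j‖ ^ 2 := by
      refine Finset.sum_le_sum fun i _ => ?_
      calc (RCLike.re (A i i)) ^ 2 ≤ ‖A i i‖ ^ 2 := by
            have := RCLike.abs_re_le_norm (A i i)
            nlinarith [abs_nonneg (RCLike.re (A i i)), sq_abs (RCLike.re (A i i))]
        _ ≤ ∑ j, ‖A i j‖ ^ 2 :=
            Finset.single_le_sum (f := fun j => ‖A i j‖ ^ 2)
              (fun j _ => by positivity) (Finset.mem_univ i)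
    have h5 : ∑ i, ∑ j, ‖A i j‖ ^ 2 = S := by
      rw [← key A, htr2, key G]
    nlinarith [Nat.cast_nonneg (α := ℝ) m]
  -- split S into diagonal and off-diagonal part
  set offD : Finset (Fin n × Fin n) := (Finset.univ : Finset (Fin n)).offDiag with hoffD
  set offS : ℝ := ∑ p ∈ offD, ‖G p.1 p.2‖ ^ 2 with hoffS
  have hsplit : S = (n : ℝ) + offS := by
    have h0 : S = ∑ p : Fin n × Fin n, ‖G p.1 p.2‖ ^ 2 := by
      rw [hS]; exact (Fintype.sum_prod_type (f := fun p : Fin n × Fin n => ‖G p.1 p.2‖ ^ 2)).symm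
    have h1 : (Finset.univ : Finset (Fin n × Fin n))
        = (Finset.univ ×ˢ Finset.univ : Finset (Fin n × Fin n)) := by
      rw [Finset.univ_product_univ]
    rw [h0, h1, ← Finset.sum_filter_add_sum_filter_not _ (fun p => p.1 = p.2)]
    have hdiag : ∑ p ∈ (Finset.univ ×ˢ Finset.univ : Finset (Fin n × Fin n)).filter
        (fun p => p.1 = p.2), ‖G p.1 p.2‖ ^ 2 = (n : ℝ) := by
      rw [Finset.sum_filter, Finset.sum_product]
      simp [Finset.sum_ite_eq, hunit]
    rw [hdiag]
    have hft : (Finset.univ ×ˢ Finset.univ : Finset (Fin n × Fin n)).filter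
        (fun p => ¬ p.1 = p.2) = offD := by
      rw [hoffD]
      ext p
      simp [Finset.mem_offDiag]
    rw [hft, ← hoffS]
  have hcard : offD.card = n * n - n := by
    rw [hoffD, Finset.offDiag_card]
    simp
  set c : ℝ := ((n : ℝ) - m) / (m * ((n : ℝ) - 1)) with hc
  -- the averaging step
  have havg : ∃ p ∈ offD, c ≤ ‖G p.1 p.2‖ ^ 2 := by
    have hne : offD.Nonempty := by
      refine ⟨(⟨0, by omega⟩, ⟨1, by omega⟩), ?_⟩
      rw [hoffD, Finset.mem_offDiag]
      refine ⟨Finset.mem_univ _, Finset.mem_univ _, ?_⟩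
      intro h
      simpa using congrArg Fin.val h
    refine Finset.exists_le_of_sum_le hne ?_
    rw [Finset.sum_const, hcard, nsmul_eq_mul, ← hoffS]
    have hcast : ((n * n - n : ℕ) : ℝ) = (n : ℝ) * ((n : ℝ) - 1) := by
      have : n ≤ n * n := Nat.le_mul_of_pos_left n (by omega)
      push_cast [Nat.cast_sub (by omega : n ≤ n * n)]
      ring
    rw [hcast, hc]
    have hm' : (0 : ℝ) < m := by exact_mod_cast hm
    have hn1 : (0 : ℝ) < (n : ℝ) - 1 := by
      have : (1 : ℝ) < n := by exact_mod_cast hn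
      linarith
    rw [div_eq_mul_inv, mul_inv]
    have hoffS_ge : (n : ℝ) ^ 2 / m - n ≤ offS := by
      rw [div_sub' (ne_of_gt hm'), div_le_iff₀ hm']
      nlinarith [hcs, hsplit]
    have hval : (n : ℝ) * ((n : ℝ) - 1) * (((n : ℝ) - m) * ((m : ℝ)⁻¹ * ((n : ℝ) - 1)⁻¹))
        = (n : ℝ) * ((n : ℝ) - m) / m := by
      field_simp
    rw [hval]
    rw [div_le_iff₀ hm']
    nlinarith [hoffS_ge, hm']
  obtain ⟨p, hp, hple⟩ := havg
  refine ⟨p.1, p.2, ?_, ?_⟩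
  · exact (Finset.mem_offDiag.mp hp).2.2
  · calc Real.sqrt c ≤ Real.sqrt (‖G p.1 p.2‖ ^ 2) := Real.sqrt_le_sqrt hple
      _ = ‖G p.1 p.2‖ := Real.sqrt_sq (norm_nonneg _)
end

section
/- Let A be the adjacency matrix of a graph on n vertices with A𝟏 = k𝟏, and suppose there exist scalars α, β > 0 such that [2βA + (β+1)I − βJ]² = α[2βA + (β+1)I − βJ]. Then A² = xA + yI + zJ where x = (α−2β−2)/(2β), y = (α−β−1)(β+1)/(4β²), and z = (4βk+2β+2−βn−α)/(4β); consequently A is the adjacency matrix of a strongly regular graph whose parameters satisfy λ + μ = 2k − n/2, i.e., v = n = 4k − 2λ − 2μ. -/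
open Matrix

/-- `A` is the adjacency matrix of a strongly regular graph with parameters
`(v, k, λ, μ)`. -/
def IsSRG {v : ℕ} (A : Matrix (Fin v) (Fin v) ℝ) (k l mu : ℝ) : Prop :=
  A.IsAdjMatrix ∧
    (A *ᵥ (fun _ => (1 : ℝ)) = fun _ => k) ∧
    A * A = (l - mu) • A + (k - mu) • (1 : Matrix (Fin v) (Fin v) ℝ)
      + mu • Matrix.of (fun _ _ => (1 : ℝ))

/-- Let `A` be the adjacency matrix of a graph on `n` vertices with `A𝟏 = k𝟏`,
and suppose `[2βA + (β+1)I − βJ]² = α[2βA + (β+1)I − βJ]` for scalars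
`α, β > 0`.  Then `A² = xA + yI + zJ` with `x = (α−2β−2)/(2β)`,
`y = (α−β−1)(β+1)/(4β²)`, `z = (4βk+2β+2−βn−α)/(4β)`; consequently `A` is the
adjacency matrix of an SRG (with `λ = x + z`, `μ = z`) whose parameters
satisfy `λ + μ = 2k − n/2`, i.e. `v = n = 4k − 2λ − 2μ`. -/
theorem regular_graph_etf_condition_gives_srg (n : ℕ)
    (A : Matrix (Fin n) (Fin n) ℝ) (hadj : A.IsAdjMatrix) (k : ℝ)
    (hreg : A *ᵥ (fun _ => (1 : ℝ)) = k • (fun _ => (1 : ℝ)))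
    (α β : ℝ) (hα : 0 < α) (hβ : 0 < β)
    (hsq : ((2 * β) • A + (β + 1) • (1 : Matrix (Fin n) (Fin n) ℝ)
          - β • Matrix.of (fun _ _ => (1 : ℝ))) *
        ((2 * β) • A + (β + 1) • (1 : Matrix (Fin n) (Fin n) ℝ)
          - β • Matrix.of (fun _ _ => (1 : ℝ)))
      = α • ((2 * β) • A + (β + 1) • (1 : Matrix (Fin n) (Fin n) ℝ)
          - β • Matrix.of (fun _ _ => (1 : ℝ)))) :
    A * A = ((α - 2 * β - 2) / (2 * β)) • A
        + ((α - β - 1) * (β + 1) / (4 * β ^ 2)) • (1 : Matrix (Fin n) (Fin n) ℝ)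
        + ((4 * β * k + 2 * β + 2 - β * n - α) / (4 * β)) • Matrix.of (fun _ _ => (1 : ℝ))
      ∧ IsSRG A k
          ((α - 2 * β - 2) / (2 * β) + (4 * β * k + 2 * β + 2 - β * n - α) / (4 * β))
          ((4 * β * k + 2 * β + 2 - β * n - α) / (4 * β))
      ∧ ((α - 2 * β - 2) / (2 * β) + (4 * β * k + 2 * β + 2 - β * n - α) / (4 * β))
          + (4 * β * k + 2 * β + 2 - β * n - α) / (4 * β) = 2 * k - (n : ℝ) / 2
      ∧ (n : ℝ) = 4 * k
          - 2 * ((α - 2 * β - 2) / (2 * β) + (4 * β * k + 2 * β + 2 - β * n - α) / (4 * β))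
          - 2 * ((4 * β * k + 2 * β + 2 - β * n - α) / (4 * β)) := by
  classical
  set J : Matrix (Fin n) (Fin n) ℝ := Matrix.of (fun _ _ => (1 : ℝ)) with hJ
  have hsum : ∀ i, (∑ j, A i j) = k := by
    intro i
    have := congrFun hreg i
    simpa [Matrix.mulVec, dotProduct] using this
  have hsymm : ∀ a b, A a b = A b a := fun a b =>
    congrFun (congrFun hadj.symm b) a
  have hAJ : A * J = k • J := by
    ext i j
    simp [hJ, Matrix.mul_apply, hsum i]
  have hJA : J * A = k • J := by
    ext i j
    simp only [hJ, Matrix.mul_apply, Matrix.of_apply, one_mul, Matrix.smul_apply,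
      smul_eq_mul, mul_one]
    rw [Finset.sum_congr rfl (fun l _ => hsymm l j), hsum j]
  have hJJ : J * J = (n : ℝ) • J := by
    ext i j
    simp [hJ, Matrix.mul_apply]
  have hβ0 : (β : ℝ) ≠ 0 := ne_of_gt hβ
  have hβ2 : (4 * β ^ 2 : ℝ) ≠ 0 := by positivity
  have e := hsq
  simp only [mul_add, add_mul, mul_sub, sub_mul, smul_mul_assoc, mul_smul_comm,
    Matrix.one_mul, Matrix.mul_one, hAJ, hJA, hJJ, smul_add, smul_sub, smul_smul] at e
  have key : A * A = ((α - 2 * β - 2) / (2 * β)) • A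
        + ((α - β - 1) * (β + 1) / (4 * β ^ 2)) • (1 : Matrix (Fin n) (Fin n) ℝ)
        + ((4 * β * k + 2 * β + 2 - β * n - α) / (4 * β)) • J := by
    apply smul_right_injective _ hβ2
    have h1 : (4 * β ^ 2 : ℝ) * ((α - 2 * β - 2) / (2 * β)) = 2 * β * (α - 2 * β - 2) := by
      field_simp; ring
    have h2 : (4 * β ^ 2 : ℝ) * ((α - β - 1) * (β + 1) / (4 * β ^ 2))
        = (α - β - 1) * (β + 1) := by field_simp
    have h3 : (4 * β ^ 2 : ℝ) * ((4 * β * k + 2 * β + 2 - β * n - α) / (4 * β))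
        = β * (4 * β * k + 2 * β + 2 - β * n - α) := by field_simp
    show (4 * β ^ 2 : ℝ) • (A * A) = (4 * β ^ 2 : ℝ) • _
    rw [smul_add, smul_add, smul_smul, smul_smul, smul_smul, h1, h2, h3]
    linear_combination (norm := module) e
  refine ⟨key, ⟨hadj, ?_, ?_⟩, ?_, ?_⟩
  · funext i
    have := congrFun hreg i
    simpa using this
  · rcases Nat.eq_zero_or_pos n with hn | hn
    · subst hn
      ext i j
      exact i.elim0
    · obtain ⟨i⟩ := Fin.pos_iff_nonempty.mp hn
      have hd1 : (A * A) i i = k := by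
        rw [Matrix.mul_apply]
        have hsq' : ∀ j, A i j * A j i = A i j := by
          intro j
          rw [← hsymm i j]
          rcases hadj.zero_or_one i j with h | h <;> rw [h] <;> ring
        rw [Finset.sum_congr rfl fun j _ => hsq' j]
        exact hsum i
      have hd2 : (A * A) i i = (α - β - 1) * (β + 1) / (4 * β ^ 2)
          + (4 * β * k + 2 * β + 2 - β * n - α) / (4 * β) := by
        rw [key]
        simp [hadj.apply_diag i, hJ]
      have hky : k - (4 * β * k + 2 * β + 2 - β * n - α) / (4 * β)
          = (α - β - 1) * (β + 1) / (4 * β ^ 2) := by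
        have := hd1.symm.trans hd2
        linarith
      have hx : ((α - 2 * β - 2) / (2 * β) + (4 * β * k + 2 * β + 2 - β * n - α) / (4 * β))
          - (4 * β * k + 2 * β + 2 - β * n - α) / (4 * β) = (α - 2 * β - 2) / (2 * β) := by
        ring
      rw [hx, hky]
      exact key
  · field_simp
    ring
  · field_simp
    ring
end

section
/- Let φ₁,…,φₙ be a centered ETF for ℝᵐ with m < n, α = n/m, β = √((n−m)/(m(n−1))). Then A = (1/(2β))Φ*Φ − ((β+1)/(2β))I + (1/2)J is the adjacency matrix of an SRG(v,k,λ,μ) with v = n, k = (n−1)/2 − 1/(2β), λ = n/4 − 1 + (α−4)/(4β), μ = n/4 − α/(4β), and these parameters satisfy v = 4k − 2λ − 2μ. -/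
open Matrix

/-- Let `Φ` be the synthesis operator of a centered ETF of `n` vectors for
`ℝ^m` with `m < n`, `α = n/m`, `β = √((n−m)/(m(n−1)))`.  Then
`A = (1/(2β))ΦᴴΦ − ((β+1)/(2β))I + (1/2)J` is the adjacency matrix of an
`SRG(v,k,λ,μ)` with `v = n`, `k = (n−1)/2 − 1/(2β)`,
`λ = n/4 − 1 + (α−4)/(4β)`, `μ = n/4 − α/(4β)`, and `v = 4k − 2λ − 2μ`. -/
theorem centered_real_etf_gives_srg (m n : ℕ) (hm : 0 < m) (hmn : m < n)
    (Φ : Matrix (Fin m) (Fin n) ℝ) (α β : ℝ)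
    (hα : α = (n : ℝ) / m)
    (hβ : β = Real.sqrt (((n : ℝ) - m) / (m * ((n : ℝ) - 1))))
    (hunit : ∀ j, (Φᴴ * Φ) j j = 1)
    (htight : Φ * Φᴴ = ((n : ℝ) / m) • 1)
    (hequi : ∀ i j, i ≠ j → |(Φᴴ * Φ) i j| = β)
    (hcentered : (Φᴴ * Φ) *ᵥ (fun _ => (1 : ℝ)) = 0) :
    IsSRG ((2 * β)⁻¹ • (Φᴴ * Φ) - ((β + 1) / (2 * β)) • (1 : Matrix (Fin n) (Fin n) ℝ)
        + (2⁻¹ : ℝ) • Matrix.of (fun _ _ => (1 : ℝ)))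
      (((n : ℝ) - 1) / 2 - 1 / (2 * β))
      ((n : ℝ) / 4 - 1 + (α - 4) / (4 * β))
      ((n : ℝ) / 4 - α / (4 * β))
    ∧ (n : ℝ) = 4 * (((n : ℝ) - 1) / 2 - 1 / (2 * β))
        - 2 * ((n : ℝ) / 4 - 1 + (α - 4) / (4 * β))
        - 2 * ((n : ℝ) / 4 - α / (4 * β)) := by
  subst hα
  have hm0 : (0:ℝ) < m := by exact_mod_cast hm
  have hmn' : (m:ℝ) < n := by exact_mod_cast hmn
  have hn1 : (1:ℝ) < n := lt_of_le_of_lt (by exact_mod_cast hm) hmn'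
  have harg : 0 < ((n : ℝ) - m) / (m * ((n : ℝ) - 1)) :=
    div_pos (by linarith) (mul_pos hm0 (by linarith))
  have hβpos : 0 < β := hβ ▸ Real.sqrt_pos.mpr harg
  have hβ0 : β ≠ 0 := hβpos.ne'
  have hβ2 : β ^ 2 = ((n : ℝ) - m) / (m * ((n : ℝ) - 1)) := by
    rw [hβ, Real.sq_sqrt harg.le]
  have hn1' : (n:ℝ) - 1 ≠ 0 := by linarith
  have hR : ((n : ℝ) - 1) * β ^ 2 * m = (n : ℝ) - m := by
    rw [hβ2]; field_simp
  set G := Φᴴ * Φ with hGdef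
  -- symmetry of G entrywise
  have hGs : ∀ i j, G i j = G j i := by
    intro i j
    simp only [hGdef, Matrix.mul_apply, Matrix.conjTranspose_apply, star_trivial]
    exact Finset.sum_congr rfl fun k _ => mul_comm _ _
  have hGT : Gᵀ = G := by ext i j; exact hGs j i
  have hGrow : ∀ i, ∑ j, G i j = 0 := by
    intro i
    have := congrFun hcentered i
    simpa [Matrix.mulVec, dotProduct] using this
  have hJJ : (Matrix.of (fun _ _ => (1:ℝ)) : Matrix (Fin n) (Fin n) ℝ) *
      Matrix.of (fun _ _ => (1:ℝ)) = (n : ℝ) • Matrix.of (fun _ _ => (1:ℝ)) := by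
    ext i j; simp [Matrix.mul_apply]
  have hGJ : G * Matrix.of (fun _ _ => (1:ℝ)) = 0 := by
    ext i j; simp [Matrix.mul_apply, hGrow i]
  have hJG : (Matrix.of (fun _ _ => (1:ℝ)) : Matrix (Fin n) (Fin n) ℝ) * G = 0 := by
    ext i j
    simp only [Matrix.mul_apply, Matrix.of_apply, one_mul, Matrix.zero_apply]
    calc ∑ k, G k j = ∑ k, G j k := Finset.sum_congr rfl fun k _ => hGs k j
    _ = 0 := hGrow j
  have hG2 : G * G = ((n : ℝ) / m) • G := by
    rw [hGdef, Matrix.mul_assoc, ← Matrix.mul_assoc Φ, htight, Matrix.smul_mul,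
      Matrix.one_mul, Matrix.mul_smul]
  have hdiag : ∀ i, (((2 * β)⁻¹ • G - ((β + 1) / (2 * β)) • (1 : Matrix (Fin n) (Fin n) ℝ)
      + (2⁻¹ : ℝ) • Matrix.of (fun _ _ => (1 : ℝ)) : Matrix (Fin n) (Fin n) ℝ)) i i = 0 := by
    intro i
    simp only [Matrix.add_apply, Matrix.sub_apply, Matrix.smul_apply, Matrix.one_apply_eq,
      Matrix.of_apply, smul_eq_mul, hunit i]
    field_simp
    ring
  refine ⟨⟨⟨?_, ?_, ?_⟩, ?_, ?_⟩, ?_⟩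
  · -- zero_or_one
    intro i j
    rcases eq_or_ne i j with rfl | hij
    · exact Or.inl (hdiag i)
    · rcases abs_eq hβpos.le |>.mp (hequi i j hij) with h | h
      · right
        simp only [Matrix.add_apply, Matrix.sub_apply, Matrix.smul_apply,
          Matrix.one_apply_ne hij, Matrix.of_apply, smul_eq_mul, h]
        field_simp
        ring
      · left
        simp only [Matrix.add_apply, Matrix.sub_apply, Matrix.smul_apply,
          Matrix.one_apply_ne hij, Matrix.of_apply, smul_eq_mul, h]
        field_simp
        ring
  · -- symm
    show _ᵀ = _
    have hJT : (Matrix.of (fun _ _ => (1:ℝ)) : Matrix (Fin n) (Fin n) ℝ)ᵀ =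
        Matrix.of (fun _ _ => (1:ℝ)) := by ext i j; rfl
    rw [Matrix.transpose_add, Matrix.transpose_sub, Matrix.transpose_smul,
      Matrix.transpose_smul, Matrix.transpose_smul, Matrix.transpose_one, hGT, hJT]
  · exact hdiag
  · -- degree
    have hJ1 : (Matrix.of (fun _ _ => (1:ℝ)) : Matrix (Fin n) (Fin n) ℝ) *ᵥ
        (fun _ => (1:ℝ)) = fun _ => (n : ℝ) := by
      funext i; simp [Matrix.mulVec, dotProduct]
    rw [Matrix.add_mulVec, Matrix.sub_mulVec, Matrix.smul_mulVec,
      Matrix.smul_mulVec, Matrix.smul_mulVec, hcentered, Matrix.one_mulVec, hJ1]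
    funext i
    simp only [Pi.add_apply, Pi.sub_apply, Pi.smul_apply, Pi.zero_apply, smul_zero, smul_eq_mul]
    field_simp
    ring
  · -- the matrix equation
    simp only [Matrix.add_mul, Matrix.sub_mul, Matrix.mul_add, Matrix.mul_sub,
      Matrix.smul_mul, Matrix.mul_smul, Matrix.mul_one, Matrix.one_mul, hG2, hGJ, hJG, hJJ,
      smul_smul, smul_zero, zero_smul, smul_add, smul_sub, Matrix.mul_zero, Matrix.zero_mul,
      sub_zero, add_zero, zero_sub]
    match_scalars
    · field_simp
      ring
    · field_simp
      linear_combination (-4) * hR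
    · field_simp
      ring
  · field_simp
    ring
end

section
/- Let φ₁,…,φₙ be an axial ETF for ℝᵐ with m < n, α = n/m, β = √((n−m)/(m(n−1))). Then A = (1/(2β))Φ*Φ − ((β+1)/(2β))I + (1/2)J is the adjacency matrix of an SRG(v,k,λ,μ) with v = n, k = (n−1)/2 + (α−1)/(2β), λ = n/4 − 1 + (3α−4)/(4β), μ = n/4 + α/(4β), and these parameters satisfy v = 4k − 2λ − 2μ. -/
open Matrix

lemma srg_auxL {n : ℕ} (G J : Matrix (Fin n) (Fin n) ℝ) (a b c α : ℝ)
    (hG2 : G * G = α • G) (hGJ : G * J = α • J) (hJG : J * G = α • J)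
    (hJJ : J * J = (n : ℝ) • J) :
    (a • G - b • 1 + c • J) * (a • G - b • 1 + c • J)
      = (a * a * α - 2 * (a * b)) • G + (b * b) • (1 : Matrix (Fin n) (Fin n) ℝ)
        + (2 * (a * c * α) + c * c * (n : ℝ) - 2 * (b * c)) • J := by
  simp only [Matrix.sub_mul, Matrix.mul_sub, Matrix.add_mul, Matrix.mul_add,
    smul_mul_assoc, Matrix.mul_smul, hG2, hGJ, hJG, hJJ, Matrix.mul_one, Matrix.one_mul]
  module

lemma srg_auxR {n : ℕ} (G J : Matrix (Fin n) (Fin n) ℝ) (a b c t s u : ℝ) :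
    t • (a • G - b • 1 + c • J) + s • (1 : Matrix (Fin n) (Fin n) ℝ) + u • J
      = (t * a) • G + (s - t * b) • (1 : Matrix (Fin n) (Fin n) ℝ) + (t * c + u) • J := by
  module

/-- Let `Φ` be the synthesis operator of an axial ETF of `n` vectors for
`ℝ^m` with `m < n`, `α = n/m`, `β = √((n−m)/(m(n−1)))`.  Then
`A = (1/(2β))ΦᴴΦ − ((β+1)/(2β))I + (1/2)J` is the adjacency matrix of an
`SRG(v,k,λ,μ)` with `v = n`, `k = (n−1)/2 + (α−1)/(2β)`,
`λ = n/4 − 1 + (3α−4)/(4β)`, `μ = n/4 + α/(4β)`, and `v = 4k − 2λ − 2μ`. -/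
theorem axial_real_etf_gives_srg (m n : ℕ) (hm : 0 < m) (hmn : m < n)
    (Φ : Matrix (Fin m) (Fin n) ℝ) (α β : ℝ)
    (hα : α = (n : ℝ) / m)
    (hβ : β = Real.sqrt (((n : ℝ) - m) / (m * ((n : ℝ) - 1))))
    (hunit : ∀ j, (Φᴴ * Φ) j j = 1)
    (htight : Φ * Φᴴ = ((n : ℝ) / m) • 1)
    (hequi : ∀ i j, i ≠ j → |(Φᴴ * Φ) i j| = β)
    (haxial : (Φᴴ * Φ) *ᵥ (fun _ => (1 : ℝ)) = α • (fun _ => (1 : ℝ))) :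
    IsSRG ((2 * β)⁻¹ • (Φᴴ * Φ) - ((β + 1) / (2 * β)) • (1 : Matrix (Fin n) (Fin n) ℝ)
        + (2⁻¹ : ℝ) • Matrix.of (fun _ _ => (1 : ℝ)))
      (((n : ℝ) - 1) / 2 + (α - 1) / (2 * β))
      ((n : ℝ) / 4 - 1 + (3 * α - 4) / (4 * β))
      ((n : ℝ) / 4 + α / (4 * β))
    ∧ (n : ℝ) = 4 * (((n : ℝ) - 1) / 2 + (α - 1) / (2 * β))
        - 2 * ((n : ℝ) / 4 - 1 + (3 * α - 4) / (4 * β))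
        - 2 * ((n : ℝ) / 4 + α / (4 * β)) := by
  have hm0 : (0 : ℝ) < m := by exact_mod_cast hm
  have hn1 : (1 : ℝ) < n := by
    have : (1 : ℕ) < n := lt_of_le_of_lt hm hmn
    exact_mod_cast this
  have hmn' : (m : ℝ) < n := by exact_mod_cast hmn
  have hβpos : 0 < β := by
    rw [hβ]
    apply Real.sqrt_pos.mpr
    exact div_pos (by linarith) (mul_pos hm0 (by linarith))
  have hβ0 : β ≠ 0 := ne_of_gt hβpos
  have hβsq : β ^ 2 = ((n : ℝ) - m) / (m * ((n : ℝ) - 1)) := by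
    rw [hβ, Real.sq_sqrt]
    exact div_nonneg (by linarith) (le_of_lt (mul_pos hm0 (by linarith)))
  have hα' : α = ((n : ℝ) - 1) * β ^ 2 + 1 := by
    rw [hβsq, hα]
    have h1 : (m : ℝ) ≠ 0 := ne_of_gt hm0
    have h2 : (n : ℝ) - 1 ≠ 0 := by linarith
    field_simp
    ring
  set G := Φᴴ * Φ with hGdef
  set J : Matrix (Fin n) (Fin n) ℝ := Matrix.of (fun _ _ => (1 : ℝ)) with hJdef
  have hGsymm : Gᵀ = G := by
    ext i j
    simp only [hGdef, transpose_apply, Matrix.mul_apply, Matrix.conjTranspose_apply,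
      star_trivial]
    exact Finset.sum_congr rfl fun k _ => mul_comm _ _
  have hGsym : ∀ i j, G j i = G i j := fun i j => congrFun (congrFun hGsymm i) j
  have hrow : ∀ i, ∑ j, G i j = α := by
    intro i
    have := congrFun haxial i
    simpa [Matrix.mulVec, dotProduct] using this
  have hcol : ∀ j, ∑ i, G i j = α := by
    intro j
    rw [Finset.sum_congr rfl fun i _ => hGsym j i]
    exact hrow j
  have hG2 : G * G = α • G := by
    rw [hGdef, show Φᴴ * Φ * (Φᴴ * Φ) = Φᴴ * ((Φ * Φᴴ) * Φ) by
      simp only [Matrix.mul_assoc], htight, hα]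
    simp [Matrix.smul_mul, Matrix.mul_smul, Matrix.one_mul]
  have hGJ : G * J = α • J := by
    ext i j
    simp only [Matrix.mul_apply, hJdef, Matrix.of_apply, mul_one, Matrix.smul_apply,
      smul_eq_mul]
    rw [hrow i]
  have hJG : J * G = α • J := by
    ext i j
    simp only [Matrix.mul_apply, hJdef, Matrix.of_apply, one_mul, Matrix.smul_apply,
      smul_eq_mul]
    rw [hcol j, mul_one]
  have hJJ : J * J = (n : ℝ) • J := by
    ext i j
    simp [hJdef, Matrix.mul_apply]
  refine ⟨⟨⟨?_, ?_, ?_⟩, ?_, ?_⟩, ?_⟩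
  · -- zero_or_one
    intro i j
    by_cases h : i = j
    · subst h
      left
      simp only [Matrix.add_apply, Matrix.sub_apply, Matrix.smul_apply, Matrix.one_apply_eq,
        hJdef, Matrix.of_apply, smul_eq_mul, hunit i]
      field_simp
      ring
    · rcases (abs_eq (le_of_lt hβpos)).mp (hequi i j h) with h1 | h1
      · right
        simp only [Matrix.add_apply, Matrix.sub_apply, Matrix.smul_apply, hJdef,
          Matrix.of_apply, smul_eq_mul, Matrix.one_apply_ne h, h1]
        field_simp
        ring
      · left
        simp only [Matrix.add_apply, Matrix.sub_apply, Matrix.smul_apply, hJdef,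
          Matrix.of_apply, smul_eq_mul, Matrix.one_apply_ne h, h1]
        field_simp
        ring
  · -- symm
    unfold Matrix.IsSymm
    have hJsymm : Jᵀ = J := by ext i j; simp [hJdef]
    simp only [transpose_add, transpose_sub, transpose_smul, transpose_one, hGsymm, hJsymm]
  · -- apply_diag
    intro i
    simp only [Matrix.add_apply, Matrix.sub_apply, Matrix.smul_apply, Matrix.one_apply_eq,
      hJdef, Matrix.of_apply, smul_eq_mul, hunit i]
    field_simp
    ring
  · -- degree
    funext i
    have hJv : (J *ᵥ fun _ => (1 : ℝ)) i = (n : ℝ) := by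
      simp [hJdef, Matrix.mulVec, dotProduct]
    simp only [Matrix.add_mulVec, Matrix.sub_mulVec, Matrix.smul_mulVec,
      Matrix.one_mulVec, haxial, Pi.add_apply, Pi.sub_apply, Pi.smul_apply, smul_eq_mul,
      hJv, mul_one]
    field_simp
    ring
  · -- A * A equation
    rw [srg_auxL G J _ _ _ α hG2 hGJ hJG hJJ, srg_auxR]
    have c1 : (2 * β)⁻¹ * (2 * β)⁻¹ * α - 2 * ((2 * β)⁻¹ * ((β + 1) / (2 * β)))
        = (((n : ℝ) / 4 - 1 + (3 * α - 4) / (4 * β)) - ((n : ℝ) / 4 + α / (4 * β)))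
          * (2 * β)⁻¹ := by
      field_simp
      ring
    have c2 : (β + 1) / (2 * β) * ((β + 1) / (2 * β))
        = (((n : ℝ) - 1) / 2 + (α - 1) / (2 * β) - ((n : ℝ) / 4 + α / (4 * β)))
          - (((n : ℝ) / 4 - 1 + (3 * α - 4) / (4 * β)) - ((n : ℝ) / 4 + α / (4 * β)))
            * ((β + 1) / (2 * β)) := by
      rw [hα']
      field_simp
      ring
    have c3 : 2 * ((2 * β)⁻¹ * 2⁻¹ * α) + 2⁻¹ * 2⁻¹ * (n : ℝ)
        - 2 * ((β + 1) / (2 * β) * 2⁻¹)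
        = (((n : ℝ) / 4 - 1 + (3 * α - 4) / (4 * β)) - ((n : ℝ) / 4 + α / (4 * β)))
          * 2⁻¹ + ((n : ℝ) / 4 + α / (4 * β)) := by
      field_simp
      ring
    rw [c1, c2, c3]
  · -- parameter identity
    field_simp
    ring
end

section
/- Let A be the adjacency matrix of an SRG(v,k,λ,μ) with 0 < k < v−1. There exist β > 0 and a positive integer m such that G = 2βA + (β+1)I − βJ satisfies G² = αG with α = v/m (making G the Gram matrix of a real ETF) if and only if v = 4k − 2λ − 2μ. -/
open Matrix

/-- The matrix `G(β) = 2βA + (β+1)I − βJ`. -/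
def gramOf {v : ℕ} (A : Matrix (Fin v) (Fin v) ℝ) (β : ℝ) :
    Matrix (Fin v) (Fin v) ℝ :=
  (2 * β) • A + (β + 1) • (1 : Matrix (Fin v) (Fin v) ℝ)
    - β • Matrix.of (fun _ _ => (1 : ℝ))

section Aux

variable {v : ℕ} {A : Matrix (Fin v) (Fin v) ℝ} {k l mu : ℝ}

lemma srg_row_sum (h : IsSRG A k l mu) (i : Fin v) : ∑ j, A i j = k := by
  have := congrFun h.2.1 i
  simpa [Matrix.mulVec, dotProduct] using this

lemma gram_sq (h : IsSRG A k l mu) (β : ℝ) :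
    gramOf A β * gramOf A β =
      (4*β^2*(l - mu) + 4*β*(β+1)) • A
      + (4*β^2*(k - mu) + (β+1)^2) • (1 : Matrix (Fin v) (Fin v) ℝ)
      + (4*β^2*mu - 4*β^2*k - 2*β*(β+1) + β^2*(v:ℝ)) •
          Matrix.of (fun _ _ => (1 : ℝ)) := by
  have hAJ : A * Matrix.of (fun _ _ => (1 : ℝ)) = k • Matrix.of (fun _ _ => (1 : ℝ)) := by
    ext i j
    simp [Matrix.mul_apply, srg_row_sum h i]
  have hJA : (Matrix.of (fun _ _ => (1 : ℝ)) : Matrix (Fin v) (Fin v) ℝ) * A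
      = k • Matrix.of (fun _ _ => (1 : ℝ)) := by
    ext i j
    simp only [Matrix.mul_apply, Matrix.of_apply, one_mul, Matrix.smul_apply, smul_eq_mul, mul_one]
    calc ∑ m, A m j = ∑ m, A j m := Finset.sum_congr rfl (fun m _ => h.1.symm.apply j m)
      _ = k := srg_row_sum h j
  have hJJ : (Matrix.of (fun _ _ => (1 : ℝ)) : Matrix (Fin v) (Fin v) ℝ) *
      Matrix.of (fun _ _ => (1 : ℝ)) = (v:ℝ) • Matrix.of (fun _ _ => (1 : ℝ)) := by
    ext i j
    simp [Matrix.mul_apply]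
  have hAA := h.2.2
  unfold gramOf
  simp only [sub_mul, mul_sub, add_mul, mul_add, Matrix.smul_mul, Matrix.mul_smul,
    Matrix.one_mul, Matrix.mul_one, hAA, hAJ, hJA, hJJ, smul_smul, smul_add, smul_sub]
  module

end Aux

open LinearMap in
lemma trace_nat_of_idem {v : ℕ} (P : Matrix (Fin v) (Fin v) ℝ) (hP : P * P = P) :
    ∃ m : ℕ, P.trace = m := by
  set f := Matrix.toLin' P with hf
  have hff : f ∘ₗ f = f := by rw [hf, ← Matrix.toLin'_mul, hP]
  obtain ⟨p, hp⟩ := (LinearMap.isProj_iff_isIdempotentElem f).mpr hff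
  refine ⟨Module.finrank ℝ p, ?_⟩
  have := hp.trace
  rw [LinearMap.trace_eq_matrix_trace ℝ (Pi.basisFun ℝ (Fin v))] at this
  rw [← this]
  congr 1
  rw [hf]
  simp [LinearMap.toMatrix_eq_toMatrix', LinearMap.toMatrix'_toLin']


/-- Let `A` be the adjacency matrix of an `SRG(v,k,λ,μ)` with `0 < k < v−1`.
There exist `β > 0` and a positive integer `m` such that
`G = 2βA + (β+1)I − βJ` satisfies `G² = (v/m)G` (making `G` the Gram matrix of
a real ETF for `ℝ^m`) if and only if `v = 4k − 2λ − 2μ`. -/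
theorem srg_gram_etf_iff (v : ℕ) (k l mu : ℝ)
    (A : Matrix (Fin v) (Fin v) ℝ) (h : IsSRG A k l mu)
    (hk : 0 < k) (hk' : k < (v : ℝ) - 1) :
    (∃ β : ℝ, 0 < β ∧ ∃ m : ℕ, 0 < m ∧
        gramOf A β * gramOf A β = ((v : ℝ) / m) • gramOf A β) ↔
      (v : ℝ) = 4 * k - 2 * l - 2 * mu := by
  have hv1 : (1:ℝ) < (v:ℝ) := by linarith
  have hv0 : 0 < v := by exact_mod_cast lt_trans one_pos hv1
  constructor
  · rintro ⟨β, hβ, m, hm, hG⟩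
    set α := (v:ℝ)/m with hα
    rw [gram_sq h β] at hG
    -- pick an index
    set i : Fin v := ⟨0, hv0⟩ with hi
    -- an edge
    obtain ⟨j, hj1, hjne⟩ : ∃ j, A i j = 1 ∧ j ≠ i := by
      have hsum := srg_row_sum h i
      by_contra hc
      push_neg at hc
      have hall : ∀ j, A i j = 0 := by
        intro j
        rcases h.1.zero_or_one i j with h0 | h1
        · exact h0
        · exfalso
          rcases eq_or_ne j i with rfl | hne
          · rw [h.1.apply_diag] at h1; norm_num at h1
          · exact hne (hc j h1)
      rw [Finset.sum_eq_zero (fun j _ => hall j)] at hsum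
      linarith
    -- a non-edge
    obtain ⟨j', hj'0, hj'ne⟩ : ∃ j', A i j' = 0 ∧ j' ≠ i := by
      by_contra hc
      push_neg at hc
      have hone : ∀ x ∈ Finset.univ.erase i, A i x = 1 := by
        intro x hx
        rcases h.1.zero_or_one i x with h0 | h1
        · exact absurd (hc x h0) (Finset.ne_of_mem_erase hx).elim
        · exact h1
      have hsum := srg_row_sum h i
      rw [← Finset.sum_erase_add _ _ (Finset.mem_univ i), h.1.apply_diag, add_zero,
        Finset.sum_congr rfl hone, Finset.sum_const, Finset.card_erase_of_mem (Finset.mem_univ i),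
        Finset.card_univ, Fintype.card_fin, nsmul_eq_mul, mul_one] at hsum
      rw [Nat.cast_sub hv0] at hsum
      push_cast at hsum
      linarith
    have ediag := congrFun (congrFun hG i) i
    have eedge := congrFun (congrFun hG i) j
    have enon := congrFun (congrFun hG i) j'
    simp only [Matrix.add_apply, Matrix.smul_apply, Matrix.sub_apply, Matrix.of_apply,
      smul_eq_mul, gramOf, Matrix.one_apply_eq, h.1.apply_diag, hj1, hj'0,
      Matrix.one_apply_ne' (by exact hjne), Matrix.one_apply_ne' (by exact hj'ne),
      mul_zero, mul_one, zero_add, add_zero] at ediag eedge enon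
    have hβ2 : β^2 ≠ 0 := pow_ne_zero 2 (ne_of_gt hβ)
    have key : β^2 * ((v:ℝ) - (4*k - 2*l - 2*mu)) = 0 := by
      linear_combination (1/2)*eedge + (1/2)*enon
    rcases mul_eq_zero.mp key with h0 | h0
    · exact absurd h0 hβ2
    · linarith
  · intro hv
    have hvne : (v:ℝ) - 1 ≠ 0 := by linarith
    set s := l - mu + 1 with hs
    have hD : 0 < s^2 + ((v:ℝ)-1) := by nlinarith [sq_nonneg s]
    set q := Real.sqrt (s^2 + ((v:ℝ)-1)) with hqdef
    have hq2 : q^2 = s^2 + ((v:ℝ)-1) := Real.sq_sqrt hD.le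
    have hq0 : 0 ≤ q := Real.sqrt_nonneg _
    set β := (s + q)/((v:ℝ)-1) with hβdef
    have hβpos : 0 < β := by
      apply div_pos _ (by linarith)
      nlinarith [hq2, hq0]
    have hquad : ((v:ℝ)-1) * β^2 = 2*s*β + 1 := by
      rw [hβdef]
      field_simp
      nlinarith [hq2]
    set α := 2*β*s + 2 with hαdef
    have hαpos : 0 < α := by nlinarith [hquad, sq_nonneg β]
    have hGG : gramOf A β * gramOf A β = α • gramOf A β := by
      rw [gram_sq h β]
      unfold gramOf
      rw [smul_sub, smul_add]
      match_scalars
      · rw [hαdef, hs]; ring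
      · rw [hαdef]; linear_combination (-β^2) * hv + hquad
      · rw [hαdef]; linear_combination β^2 * hv
    have htr : (gramOf A β).trace = (v:ℝ) := by
      unfold gramOf Matrix.trace
      simp [Matrix.diag, h.1.apply_diag]
    set P := α⁻¹ • gramOf A β with hP
    have hPP : P * P = P := by
      rw [hP, Matrix.smul_mul, Matrix.mul_smul, hGG, smul_smul, smul_smul]
      congr 1
      field_simp
    obtain ⟨m, hmtr⟩ := trace_nat_of_idem P hPP
    have hmval : (m:ℝ) = (v:ℝ)/α := by
      rw [← hmtr, hP, Matrix.trace_smul, htr, smul_eq_mul]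
      ring
    have hmpos : 0 < m := by
      rcases Nat.eq_zero_or_pos m with h0 | h0
      · exfalso
        rw [h0] at hmval
        simp at hmval
        have : 0 < (v:ℝ)/α := div_pos (by linarith) hαpos
        linarith
      · exact h0
    refine ⟨β, hβpos, m, hmpos, ?_⟩
    have : ((v:ℝ)/m) = α := by
      rw [hmval]
      field_simp
    rw [this, hGG]
end

section
/- Let A be the adjacency matrix of an SRG(v,k,λ,μ) with 0 < k < v−1 and v = 4k − 2λ − 2μ, and suppose v − 2k − 1 > 0. Then the unique β > 0 for which G = 2βA + (β+1)I − βJ satisfies G² = αG for some α is β = 1/(v−2k−1), with α = (v−1)/(v−2k−1)² + 1 and m = v/α = v(v−2k−1)²/((v−1)+(v−2k−1)²); moreover G𝟏 = 0, so the resulting ETF is centered. -/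
open Matrix

lemma expandG {v : ℕ} {A : Matrix (Fin v) (Fin v) ℝ} {k l mu : ℝ}
    (h : IsSRG A k l mu) (β : ℝ) :
    gramOf A β * gramOf A β =
      (4*β^2*(l-mu) + 4*β*(β+1)) • A
      + (4*β^2*(k-mu) + (β+1)^2) • (1 : Matrix (Fin v) (Fin v) ℝ)
      + (4*β^2*(mu-k) - 2*β*(β+1) + β^2*(v:ℝ)) • Matrix.of (fun _ _ => (1:ℝ)) := by
  obtain ⟨hadj, h1, h2⟩ := h
  set J : Matrix (Fin v) (Fin v) ℝ := Matrix.of (fun _ _ => (1:ℝ)) with hJdef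
  have hAJ : A * J = k • J := by
    ext i j
    have := congrFun h1 i
    simp only [Matrix.mulVec, dotProduct, mul_one] at this
    simp [Matrix.mul_apply, hJdef, this]
  have hJA : J * A = k • J := by
    ext i j
    have := congrFun h1 j
    simp only [Matrix.mulVec, dotProduct, mul_one] at this
    have hsymm : ∀ x, A x j = A j x := fun x => by
      conv_lhs => rw [← hadj.symm]
      rfl
    simp [Matrix.mul_apply, hJdef, hsymm, this]
  have hJJ : J * J = (v:ℝ) • J := by
    ext i j
    simp [Matrix.mul_apply, hJdef]
  rw [gramOf, ← hJdef]
  rw [sub_mul, mul_sub, mul_sub, add_mul, add_mul, mul_add, mul_add, mul_add, mul_add]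
  simp only [smul_mul_assoc, mul_smul_comm, Matrix.one_mul, Matrix.mul_one, h2, hAJ, hJA, hJJ,
    smul_add, smul_smul, smul_sub]
  module

/-- Let `A` be the adjacency matrix of an `SRG(v,k,λ,μ)` with `0 < k < v−1`,
`v = 4k − 2λ − 2μ` and `v − 2k − 1 > 0`.  Then the unique `β > 0` for which
`G = 2βA + (β+1)I − βJ` satisfies `G² = αG` for some `α` is
`β = 1/(v−2k−1)`, with `α = (v−1)/(v−2k−1)² + 1` and
`m = v/α = v(v−2k−1)²/((v−1)+(v−2k−1)²)` a positive integer; moreover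
`G𝟏 = 0`, so the resulting ETF is centered. -/
theorem srg_gives_centered_etf (v : ℕ) (k l mu : ℝ)
    (A : Matrix (Fin v) (Fin v) ℝ) (h : IsSRG A k l mu)
    (hk : 0 < k) (hk' : k < (v : ℝ) - 1)
    (hspecial : (v : ℝ) = 4 * k - 2 * l - 2 * mu)
    (hpos : 0 < (v : ℝ) - 2 * k - 1) :
    (∀ β : ℝ, 0 < β → (∃ α : ℝ, gramOf A β * gramOf A β = α • gramOf A β) →
        β = 1 / ((v : ℝ) - 2 * k - 1))
    ∧ gramOf A (1 / ((v : ℝ) - 2 * k - 1)) * gramOf A (1 / ((v : ℝ) - 2 * k - 1))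
        = (((v : ℝ) - 1) / ((v : ℝ) - 2 * k - 1) ^ 2 + 1)
            • gramOf A (1 / ((v : ℝ) - 2 * k - 1))
    ∧ (∃ m : ℕ, 0 < m ∧
        (m : ℝ) = (v : ℝ) * ((v : ℝ) - 2 * k - 1) ^ 2
            / (((v : ℝ) - 1) + ((v : ℝ) - 2 * k - 1) ^ 2) ∧
        (v : ℝ) / m = ((v : ℝ) - 1) / ((v : ℝ) - 2 * k - 1) ^ 2 + 1)
    ∧ gramOf A (1 / ((v : ℝ) - 2 * k - 1)) *ᵥ (fun _ => (1 : ℝ)) = 0 := by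
  obtain ⟨hadj, h1, h2⟩ := h
  have hIS : IsSRG A k l mu := ⟨hadj, h1, h2⟩
  have hV1 : (1:ℝ) < (v:ℝ) := by linarith
  have hv0 : 0 < v := by exact_mod_cast lt_trans one_pos hV1
  have hs0 : (v:ℝ) - 2*k - 1 ≠ 0 := ne_of_gt hpos
  have hVm1 : (0:ℝ) < (v:ℝ) - 1 := by linarith
  set J : Matrix (Fin v) (Fin v) ℝ := Matrix.of (fun _ _ => (1:ℝ)) with hJdef
  have hJ1 : J *ᵥ (fun _ => (1:ℝ)) = fun _ => (v:ℝ) := by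
    ext i
    simp [Matrix.mulVec, dotProduct, hJdef]
  have hAk : A *ᵥ (fun _ => k) = fun _ => k * k := by
    ext i
    have := congrFun h1 i
    simp only [Matrix.mulVec, dotProduct, mul_one] at this ⊢
    rw [← Finset.sum_mul] at *
    rw [show (∑ x, A i x) = k from by simpa using this]
  have i₀ : Fin v := ⟨0, hv0⟩
  have key : k * k = (l - mu) * k + (k - mu) + mu * (v:ℝ) := by
    have h2v := congrArg (fun M => M *ᵥ (fun _ => (1:ℝ))) h2
    simp only [Matrix.add_mulVec, Matrix.smul_mulVec, Matrix.one_mulVec,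
      ← Matrix.mulVec_mulVec, h1, hAk, ← hJdef, hJ1] at h2v
    have := congrFun h2v i₀
    simpa [Pi.smul_apply, smul_eq_mul] using this
  have hmu : 2 * ((v:ℝ) - 2*k - 1) * mu = k * ((v:ℝ) - 2*k - 2) := by
    linear_combination (-2 : ℝ) * key - k * hspecial
  have muval : mu = k * ((v:ℝ) - 2*k - 2) / (2 * ((v:ℝ) - 2*k - 1)) := by
    rw [eq_div_iff (mul_ne_zero two_ne_zero hs0)]
    linear_combination hmu
  have lval : l = ((v:ℝ) - 2*k) * (k - ((v:ℝ) - 2*k - 1)) / (2 * ((v:ℝ) - 2*k - 1)) := by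
    field_simp
    linear_combination 2 * key + ((v:ℝ) - k - 1) * hspecial
  -- the non-neighbour
  have hexJ : ∃ j : Fin v, j ≠ i₀ ∧ A i₀ j = 0 := by
    by_contra hcon
    push_neg at hcon
    have hall : ∀ j, j ≠ i₀ → A i₀ j = 1 := fun j hj =>
      (hadj.zero_or_one i₀ j).resolve_left (hcon j hj)
    have hrow : ∑ x, A i₀ x = k := by
      have := congrFun h1 i₀
      simpa [Matrix.mulVec, dotProduct] using this
    have : ∑ x, A i₀ x = (v:ℝ) - 1 := by
      rw [← Finset.sum_erase_add _ _ (Finset.mem_univ i₀), hadj.apply_diag, add_zero]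
      rw [Finset.sum_congr rfl (fun x hx => hall x (Finset.ne_of_mem_erase hx))]
      simp only [Finset.sum_const, Finset.card_erase_of_mem (Finset.mem_univ i₀),
        Finset.card_univ, Fintype.card_fin, nsmul_eq_mul, mul_one]
      push_cast [Nat.cast_sub hv0]
      ring
    rw [hrow] at this
    linarith
  obtain ⟨j₀, hj₀ne, hj₀⟩ := hexJ
  -- Part 1 : uniqueness
  have part1 : ∀ β : ℝ, 0 < β → (∃ α : ℝ, gramOf A β * gramOf A β = α • gramOf A β) →
      β = 1 / ((v:ℝ) - 2*k - 1) := by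
    intro β hβ hex
    obtain ⟨α, hα⟩ := hex
    rw [expandG hIS β] at hα
    have E0 := congrFun (congrFun hα i₀) i₀
    have E2 := congrFun (congrFun hα i₀) j₀
    simp only [Matrix.add_apply, Matrix.smul_apply, Matrix.sub_apply, Matrix.one_apply_eq,
      Matrix.one_apply_ne (Ne.symm hj₀ne), hadj.apply_diag, hj₀, gramOf, Matrix.of_apply,
      smul_eq_mul, mul_zero, mul_one, zero_add, add_zero] at E0 E2
    have h3 : (4*β^2*(mu-k) - 2*β*(β+1) + β^2*(v:ℝ))
        + β * ((4*β^2*(k-mu) + (β+1)^2) + (4*β^2*(mu-k) - 2*β*(β+1) + β^2*(v:ℝ))) = 0 := by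
      linear_combination E2 + β * E0
    have hfac : β * ((((v:ℝ) - 2*k - 1)*β - 1) * (((v:ℝ)-1)*β + ((v:ℝ) - 2*k - 1))) = 0 := by
      linear_combination ((v:ℝ) - 2*k - 1) * h3 - 2*β^2 * hmu
    have hne : (((v:ℝ)-1)*β + ((v:ℝ) - 2*k - 1)) > 0 := by positivity
    have hz : ((v:ℝ) - 2*k - 1) * β - 1 = 0 := by
      rcases mul_eq_zero.mp hfac with h' | h'
      · exact absurd h' (ne_of_gt hβ)
      rcases mul_eq_zero.mp h' with h'' | h''
      · exact h''
      · exact absurd h'' (ne_of_gt hne)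
    field_simp
    linarith
  -- Part 2 : the explicit Gram identity
  have part2 : gramOf A (1/((v:ℝ) - 2*k - 1)) * gramOf A (1/((v:ℝ) - 2*k - 1))
      = (((v:ℝ) - 1) / ((v:ℝ) - 2*k - 1)^2 + 1) • gramOf A (1/((v:ℝ) - 2*k - 1)) := by
    rw [expandG hIS (1/((v:ℝ) - 2*k - 1)), muval, lval, gramOf]
    rw [smul_sub, smul_add, smul_smul, smul_smul, smul_smul, ← hJdef]
    match_scalars <;> (field_simp; try ring)
  -- Part 4 : centered
  have part4 : gramOf A (1/((v:ℝ) - 2*k - 1)) *ᵥ (fun _ => (1:ℝ)) = 0 := by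
    rw [gramOf]
    rw [Matrix.sub_mulVec, Matrix.add_mulVec, Matrix.smul_mulVec,
      Matrix.smul_mulVec, Matrix.smul_mulVec, Matrix.one_mulVec, h1, ← hJdef, hJ1]
    ext i
    simp only [Pi.sub_apply, Pi.add_apply, Pi.smul_apply, Pi.zero_apply, smul_eq_mul]
    field_simp
    try ring
  -- Part 3 : the rank
  have hα₀pos : 0 < ((v:ℝ) - 1) / ((v:ℝ) - 2*k - 1)^2 + 1 := by
    have h1' : 0 < ((v:ℝ) - 1) / ((v:ℝ) - 2*k - 1)^2 := div_pos hVm1 (by positivity)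
    linarith
  have hα₀ne : ((v:ℝ) - 1) / ((v:ℝ) - 2*k - 1)^2 + 1 ≠ 0 := ne_of_gt hα₀pos
  set α₀ : ℝ := ((v:ℝ) - 1) / ((v:ℝ) - 2*k - 1)^2 + 1 with hα₀def
  set P : Matrix (Fin v) (Fin v) ℝ := α₀⁻¹ • gramOf A (1/((v:ℝ) - 2*k - 1)) with hPdef
  have hidem : P * P = P := by
    rw [hPdef, Matrix.smul_mul, Matrix.mul_smul, part2, smul_smul, smul_smul]
    congr 1
    field_simp
  have hfidem : Matrix.toLin' P ∘ₗ Matrix.toLin' P = Matrix.toLin' P := by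
    rw [← Matrix.toLin'_mul, hidem]
  obtain ⟨p, hp⟩ := (LinearMap.isProj_iff_isIdempotentElem (Matrix.toLin' P)).mpr hfidem
  have htr : LinearMap.trace ℝ (Fin v → ℝ) (Matrix.toLin' P)
      = (Module.finrank ℝ p : ℝ) := hp.trace
  have htr2 : LinearMap.trace ℝ (Fin v → ℝ) (Matrix.toLin' P) = Matrix.trace P := by
    rw [LinearMap.trace_eq_matrix_trace ℝ (Pi.basisFun ℝ (Fin v)),
      LinearMap.toMatrix_eq_toMatrix', LinearMap.toMatrix'_toLin']
  have htrG : Matrix.trace (gramOf A (1/((v:ℝ) - 2*k - 1))) = (v:ℝ) := by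
    simp only [gramOf, Matrix.trace_sub, Matrix.trace_add, Matrix.trace_smul, Matrix.trace_one]
    have h1t : Matrix.trace A = 0 := by
      simp [Matrix.trace, Matrix.diag, hadj.apply_diag]
    have h2t : Matrix.trace J = (v:ℝ) := by
      simp [Matrix.trace, Matrix.diag, hJdef]
    rw [h1t, ← hJdef, h2t]
    simp only [smul_eq_mul, mul_zero, zero_add, Fintype.card_fin]
    ring
  have htrP : Matrix.trace P = α₀⁻¹ * (v:ℝ) := by
    rw [hPdef, Matrix.trace_smul, htrG, smul_eq_mul]
  have hmval : (Module.finrank ℝ p : ℝ) = α₀⁻¹ * (v:ℝ) := by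
    rw [← htr, htr2, htrP]
  have hmpos : 0 < Module.finrank ℝ p := by
    have hvpos : (0:ℝ) < (v:ℝ) := by linarith
    have : (0:ℝ) < (Module.finrank ℝ p : ℝ) := by
      rw [hmval]
      exact mul_pos (inv_pos.mpr hα₀pos) hvpos
    exact_mod_cast this
  refine ⟨part1, part2, ⟨Module.finrank ℝ p, hmpos, ?_, ?_⟩, part4⟩
  · rw [hmval, hα₀def]
    rw [eq_div_iff (by positivity)]
    field_simp
  · have hm0 : (Module.finrank ℝ p : ℝ) ≠ 0 := by
      exact (Nat.cast_pos.mpr hmpos).ne'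
    rw [hmval, hα₀def]
    rw [div_eq_iff (by rw [← hmval]; exact hm0)]
    field_simp
end

section
/- If there exists an SRG(v,k,λ,μ) with v = 4k − 2λ − 2μ and 0 < k < v−1, then there exists an SRG with parameters (v−1, k(v−2k)/(v−2k−1), (3k−v)/2 + 3k/(2(v−2k−1)), (k/2)·(v−2k)/(v−2k−1)); in particular its 'μ' parameter equals half its 'k' parameter. -/
open Matrix

namespace SRGAux

/-- all-ones matrix -/
def Jmat (n : ℕ) : Matrix (Fin n) (Fin n) ℝ := Matrix.of fun _ _ => (1:ℝ)

variable {n : ℕ} (A : Matrix (Fin (n+1)) (Fin (n+1)) ℝ)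

def dvec : Fin (n+1) → ℝ := fun i => 1 - 2 * A 0 i

def Smat : Matrix (Fin (n+1)) (Fin (n+1)) ℝ := Jmat (n+1) - 1 - (2:ℝ) • A

def S'mat : Matrix (Fin (n+1)) (Fin (n+1)) ℝ :=
  diagonal (dvec A) * Smat A * diagonal (dvec A)

def Tmat : Matrix (Fin n) (Fin n) ℝ := Matrix.of fun i j => S'mat A i.succ j.succ

noncomputable def Bmat : Matrix (Fin n) (Fin n) ℝ :=
  (1/2 : ℝ) • (Jmat n - 1 - Tmat A)

section facts
variable {A} {k l mu : ℝ} (h : IsSRG A k l mu)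

lemma S'_apply (i j : Fin (n+1)) : S'mat A i j = dvec A i * Smat A i j * dvec A j := by
  simp [S'mat, diagonal_mul, mul_diagonal]

include h

lemma hd0 : dvec A 0 = 1 := by simp [dvec, h.1.apply_diag]

lemma hdsq (i : Fin (n+1)) : dvec A i * dvec A i = 1 := by
  rcases h.1.zero_or_one 0 i with h' | h' <;> simp [dvec, h'] <;> ring

lemma hDD : diagonal (dvec A) * diagonal (dvec A) = 1 := by
  rw [diagonal_mul_diagonal, show (fun i => dvec A i * dvec A i) = fun _ => (1:ℝ) from funext (hdsq h), diagonal_one]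

lemma hAJ : A * Jmat (n+1) = k • Jmat (n+1) := by
  ext i j
  have := congrFun h.2.1 i
  simp only [mulVec, dotProduct, mul_one] at this
  simp [Jmat, Matrix.mul_apply, this, smul_eq_mul]

lemma hJA : Jmat (n+1) * A = k • Jmat (n+1) := by
  ext i j
  have := congrFun h.2.1 j
  simp only [mulVec, dotProduct, mul_one] at this
  have hsymm : ∀ m, A m j = A j m := fun m => congrFun (congrFun h.1.symm.symm m) j
  simp only [Jmat, Matrix.mul_apply, Matrix.of_apply, one_mul, Matrix.smul_apply, smul_eq_mul, mul_one]
  rw [Finset.sum_congr rfl fun m _ => hsymm m, this]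

lemma hJJ : Jmat (n+1) * Jmat (n+1) = ((n:ℝ)+1) • Jmat (n+1) := by
  ext i j
  simp [Jmat, Matrix.mul_apply]

lemma hS2 (hspecial : ((n:ℝ)+1) = 4 * k - 2 * l - 2 * mu) :
    Smat A * Smat A = ((n:ℝ)) • 1 + (2*(mu - l - 1)) • Smat A := by
  have hA2 := h.2.2
  simp only [Smat]
  rw [show (2*(mu - l - 1)) • (Jmat (n+1) - 1 - (2:ℝ) • A)
      = (2*(mu - l - 1)) • Jmat (n+1) - (2*(mu - l - 1)) • (1 : Matrix (Fin (n+1)) (Fin (n+1)) ℝ)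
        - (2*(2*(mu - l - 1))) • A by
    simp only [smul_sub, smul_smul]; ring_nf]
  simp only [Matrix.sub_mul, Matrix.mul_sub, Matrix.smul_mul, Matrix.mul_smul,
    Matrix.one_mul, Matrix.mul_one, hJJ h, hAJ h, hJA h, hA2, smul_smul]
  have hJ : Matrix.of (fun _ _ => (1:ℝ)) = Jmat (n+1) := rfl
  rw [hJ]
  have h1 : ((n:ℝ)) = 4 * k - 2 * l - 2 * mu - 1 := by linarith
  rw [h1]
  ext i j
  simp only [Matrix.sub_apply, Matrix.add_apply, Matrix.smul_apply, smul_eq_mul]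
  ring

lemma hS'2 (hspecial : ((n:ℝ)+1) = 4 * k - 2 * l - 2 * mu) : S'mat A * S'mat A = ((n:ℝ)) • 1 + (2*(mu - l - 1)) • S'mat A := by
  have : S'mat A * S'mat A
      = diagonal (dvec A) * (Smat A * Smat A) * diagonal (dvec A) := by
    simp only [S'mat, Matrix.mul_assoc]
    rw [← Matrix.mul_assoc (diagonal (dvec A)) (diagonal (dvec A)), hDD h, Matrix.one_mul]
  rw [this, hS2 h hspecial]
  simp only [Matrix.mul_add, Matrix.add_mul, Matrix.mul_smul, Matrix.smul_mul, S'mat]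
  rw [Matrix.mul_one, hDD h]

omit h in
lemma S_apply (i j : Fin (n+1)) :
    Smat A i j = 1 - (if i = j then (1:ℝ) else 0) - 2 * A i j := by
  simp [Smat, Jmat, Matrix.one_apply]

omit h in
lemma S'_symm_apply (hs : A.IsSymm) (i j : Fin (n+1)) : S'mat A i j = S'mat A j i := by
  have hA : A i j = A j i := (congrFun (congrFun hs.symm i) j)
  by_cases hij : i = j
  · subst hij; rfl
  · rw [S'_apply, S'_apply, S_apply, S_apply, if_neg hij, if_neg (Ne.symm hij), hA]
    ring

lemma S'_diag (i : Fin (n+1)) : S'mat A i i = 0 := by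
  rw [S'_apply, S_apply, h.1.apply_diag]
  simp

lemma S'_zero_succ (j : Fin n) : S'mat A 0 j.succ = 1 := by
  rw [S'_apply, S_apply, hd0 h, if_neg (Fin.succ_ne_zero j).symm, one_mul]
  have : dvec A j.succ = 1 - 2 * A 0 j.succ := rfl
  rw [this]
  rcases h.1.zero_or_one 0 j.succ with h' | h' <;> rw [h'] <;> norm_num

lemma S'_succ_zero (i : Fin n) : S'mat A i.succ 0 = 1 := by
  rw [S'_symm_apply h.1.symm]; exact S'_zero_succ h i

omit h in
lemma T_apply (i j : Fin n) : Tmat A i j = S'mat A i.succ j.succ := rfl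

lemma Trow (hspecial : ((n:ℝ)+1) = 4 * k - 2 * l - 2 * mu) (i : Fin n) :
    ∑ j, Tmat A i j = 2*(mu - l - 1) := by
  have h2 := congrFun (congrFun (hS'2 h hspecial) i.succ) 0
  rw [Matrix.mul_apply, Fin.sum_univ_succ, S'_diag h, mul_zero, zero_add] at h2
  simp only [Matrix.add_apply, Matrix.smul_apply, Matrix.one_apply,
    if_neg (Fin.succ_ne_zero i), smul_eq_mul, mul_zero, zero_add,
    S'_succ_zero h, mul_one] at h2
  simpa only [S'_succ_zero h, mul_one, T_apply] using h2

lemma hT2 (hspecial : ((n:ℝ)+1) = 4 * k - 2 * l - 2 * mu) :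
    Tmat A * Tmat A = (n:ℝ) • 1 + (2*(mu - l - 1)) • Tmat A - Jmat n := by
  ext i j
  have h2 := congrFun (congrFun (hS'2 h hspecial) i.succ) j.succ
  rw [Matrix.mul_apply, Fin.sum_univ_succ, S'_succ_zero h, S'_zero_succ h, one_mul] at h2
  simp only [Matrix.add_apply, Matrix.smul_apply, Matrix.one_apply, smul_eq_mul] at h2
  simp only [Matrix.sub_apply, Matrix.add_apply, Matrix.smul_apply, Matrix.one_apply,
    smul_eq_mul, Matrix.mul_apply, Jmat, Matrix.of_apply]
  simp only [← T_apply] at h2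
  rw [show (if i = j then (1:ℝ) else 0) = (if i.succ = j.succ then (1:ℝ) else 0) by
    simp [Fin.succ_inj]]
  linarith [h2]

lemma hTJ (hspecial : ((n:ℝ)+1) = 4 * k - 2 * l - 2 * mu) :
    Tmat A * Jmat n = (2*(mu - l - 1)) • Jmat n := by
  ext i j
  simp [Matrix.mul_apply, Jmat, Trow h hspecial i]

lemma hJT (hspecial : ((n:ℝ)+1) = 4 * k - 2 * l - 2 * mu) :
    Jmat n * Tmat A = (2*(mu - l - 1)) • Jmat n := by
  ext i j
  have : ∀ m, Tmat A m j = Tmat A j m := fun m => S'_symm_apply h.1.symm m.succ j.succ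
  simp only [Matrix.mul_apply, Jmat, Matrix.of_apply, one_mul, Matrix.smul_apply,
    smul_eq_mul, mul_one]
  rw [Finset.sum_congr rfl fun m _ => this m, Trow h hspecial j]

omit h in
lemma hJJn : Jmat n * Jmat n = (n:ℝ) • Jmat n := by
  ext i j
  simp [Jmat, Matrix.mul_apply]

lemma B_adj : (Bmat A).IsAdjMatrix := by
  constructor
  · intro i j
    by_cases hij : i = j
    · left; simp [Bmat, hij, Jmat, T_apply, S'_diag h, Matrix.one_apply]
    · have hT : Tmat A i j = 1 ∨ Tmat A i j = -1 := by
        have hne : i.succ ≠ j.succ := by simpa [Fin.succ_inj] using hij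
        rw [T_apply, S'_apply, S_apply, if_neg hne]
        rcases h.1.zero_or_one 0 i.succ with h1 | h1 <;>
        rcases h.1.zero_or_one 0 j.succ with h2 | h2 <;>
        rcases h.1.zero_or_one i.succ j.succ with h3 | h3 <;>
          simp [dvec, h1, h2, h3] <;> norm_num
      rcases hT with h' | h'
      · left; simp [Bmat, Jmat, Matrix.one_apply, if_neg hij, h']
      · right; simp [Bmat, Jmat, Matrix.one_apply, if_neg hij, h']; norm_num
  · unfold Matrix.IsSymm
    ext i j
    have := S'_symm_apply (A := A) h.1.symm j.succ i.succ
    simp [Bmat, Jmat, Matrix.one_apply, transpose_apply, T_apply, this, eq_comm]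
  · intro i
    simp [Bmat, Jmat, T_apply, S'_diag h, Matrix.one_apply]

lemma B_deg (hspecial : ((n:ℝ)+1) = 4 * k - 2 * l - 2 * mu) :
    Bmat A *ᵥ (fun _ => (1:ℝ)) = fun _ => ((n:ℝ) - 1 - 2*(mu - l - 1))/2 := by
  funext i
  simp only [Bmat, mulVec, dotProduct, Matrix.smul_apply, Matrix.sub_apply, Jmat,
    Matrix.of_apply, Matrix.one_apply, smul_eq_mul, mul_one]
  have hδ : ∑ x : Fin n, (if i = x then (1:ℝ) else 0) = 1 := by simp
  rw [← Finset.mul_sum, Finset.sum_sub_distrib, Finset.sum_sub_distrib, hδ,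
    Trow h hspecial i, Finset.sum_const, Finset.card_univ]
  simp
  ring

lemma B_quad (hspecial : ((n:ℝ)+1) = 4 * k - 2 * l - 2 * mu) :
    Bmat A * Bmat A
      = (-(2*(mu-l-1)+2)/2) • Bmat A
        + ((((n:ℝ) - 1 - 2*(mu-l-1))/2)/2) • (1 : Matrix (Fin n) (Fin n) ℝ)
        + ((((n:ℝ) - 1 - 2*(mu-l-1))/2)/2) • Jmat n := by
  have e1 : Bmat A * Bmat A = (1/4 : ℝ) •
      ((Jmat n - 1 - Tmat A) * (Jmat n - 1 - Tmat A)) := by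
    simp only [Bmat, Matrix.smul_mul, Matrix.mul_smul, smul_smul]
    norm_num
  rw [e1]
  simp only [Matrix.sub_mul, Matrix.mul_sub, Matrix.one_mul, Matrix.mul_one,
    hJJn, hTJ h hspecial, hJT h hspecial, hT2 h hspecial, Bmat]
  ext i j
  simp only [Matrix.smul_apply, Matrix.sub_apply, Matrix.add_apply, Matrix.one_apply,
    Jmat, Matrix.of_apply, smul_eq_mul]
  by_cases hij : i = j <;> simp [hij] <;> ring

lemma key (hspecial : ((n:ℝ)+1) = 4 * k - 2 * l - 2 * mu)
    {k' l' mu' : ℝ}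
    (hk' : k' = ((n:ℝ) - 1 - 2*(mu - l - 1))/2)
    (hl' : l' = k'/2 - (2*(mu-l-1)+2)/2) (hmu' : mu' = k'/2) :
    IsSRG (Bmat A) k' l' mu' := by
  refine ⟨B_adj h, ?_, ?_⟩
  · rw [B_deg h hspecial, hk']
  · have := B_quad h hspecial
    rw [this]
    have hJ : Matrix.of (fun _ _ => (1:ℝ)) = Jmat n := rfl
    rw [hJ]
    congr 1
    · congr 1
      · congr 1; rw [hl', hmu']; ring
      · congr 1; rw [hmu', hk']; ring
    · congr 1; rw [hmu', hk']

end facts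

end SRGAux

/-- If there exists an `SRG(v,k,λ,μ)` with `v = 4k − 2λ − 2μ` and
`0 < k < v−1`, then there exists an SRG with parameters
`(v−1, k(v−2k)/(v−2k−1), (3k−v)/2 + 3k/(2(v−2k−1)), (k/2)·(v−2k)/(v−2k−1))`;
in particular, its `μ` parameter equals half of its `k` parameter. -/
theorem srg_on_v_gives_srg_on_v_sub_one (v : ℕ) (hv : 1 ≤ v) (k l mu : ℝ)
    (h : ∃ A : Matrix (Fin v) (Fin v) ℝ, IsSRG A k l mu)
    (hk : 0 < k) (hk' : k < (v : ℝ) - 1)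
    (hspecial : (v : ℝ) = 4 * k - 2 * l - 2 * mu) :
    (∃ B : Matrix (Fin (v - 1)) (Fin (v - 1)) ℝ,
        IsSRG B (k * ((v : ℝ) - 2 * k) / ((v : ℝ) - 2 * k - 1))
          ((3 * k - (v : ℝ)) / 2 + 3 * k / (2 * ((v : ℝ) - 2 * k - 1)))
          (k / 2 * (((v : ℝ) - 2 * k) / ((v : ℝ) - 2 * k - 1))))
    ∧ k / 2 * (((v : ℝ) - 2 * k) / ((v : ℝ) - 2 * k - 1))
        = (k * ((v : ℝ) - 2 * k) / ((v : ℝ) - 2 * k - 1)) / 2 := by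
  obtain ⟨n, rfl⟩ : ∃ n, v = n + 1 := ⟨v - 1, (Nat.succ_pred_eq_of_pos hv).symm⟩
  obtain ⟨A, hA⟩ := h
  push_cast at hk' hspecial ⊢
  -- the quadratic counting identity
  have hquad : k * k = (l - mu) * k + (k - mu) + mu * ((n:ℝ) + 1) := by
    have h0 : ((A * A) *ᵥ fun _ => (1:ℝ)) 0
        = (((l - mu) • A + (k - mu) • (1 : Matrix (Fin (n+1)) (Fin (n+1)) ℝ)
            + mu • Matrix.of (fun _ _ => (1:ℝ))) *ᵥ fun _ => (1:ℝ)) 0 := by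
      rw [hA.2.2]
    rw [← Matrix.mulVec_mulVec, hA.2.1] at h0
    simp only [Matrix.add_mulVec, Matrix.smul_mulVec, Matrix.one_mulVec,
      Pi.add_apply, Pi.smul_apply, smul_eq_mul] at h0
    have h1 : (A *ᵥ (fun _ => k)) 0 = k * k := by
      have hc : (fun (_ : Fin (n+1)) => k) = k • (fun _ => (1:ℝ)) := by funext; simp
      rw [hc, Matrix.mulVec_smul, hA.2.1]
      simp [smul_eq_mul, mul_comm]
    have h2 : ((Matrix.of (fun _ _ => (1:ℝ)) : Matrix (Fin (n+1)) (Fin (n+1)) ℝ)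
        *ᵥ (fun _ => (1:ℝ))) 0 = (n:ℝ) + 1 := by
      simp [Matrix.mulVec, dotProduct]
    rw [h1, h2, congrFun hA.2.1 0] at h0
    linarith [h0]
  have hl : l = (4 * k - ((n:ℝ)+1)) / 2 - mu := by linarith
  have hmuq : mu * (((n:ℝ)+1) - 2*k - 1) = k * ((((n:ℝ)+1) - 2*k) - 2) / 2 := by
    nlinarith [hquad, hl]
  have hd1 : ((n:ℝ)+1) - 2*k - 1 ≠ 0 := by
    intro h0
    rw [h0, mul_zero] at hmuq
    nlinarith [hmuq, hk]
  have hmu : mu = k * ((((n:ℝ)+1) - 2*k) - 2) / (2 * (((n:ℝ)+1) - 2*k - 1)) := by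
    rw [eq_div_iff (mul_ne_zero two_ne_zero hd1)]
    linear_combination 2 * hmuq
  have hd2 : (n:ℝ) - k*2 ≠ 0 := by intro h0; apply hd1; linarith
  refine ⟨⟨SRGAux.Bmat A, SRGAux.key hA hspecial ?_ ?_ ?_⟩, by ring⟩
  · rw [hl, hmu, show ((n:ℝ)+1) - 2*k - 1 = (n:ℝ) - 2*k by ring]
    field_simp
    ring
  · rw [hl, hmu, show ((n:ℝ)+1) - 2*k - 1 = (n:ℝ) - 2*k by ring]
    field_simp
    ring
  · ring
end
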